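/- One has E_0 E*_0 E_d E*_d = (ϕ_1 ϕ_2 ⋯ ϕ_d / (τ_d(θ_d) η*_d(θ*_0))) · E_0 E*_d, where τ_d(θ_d) = (θ_d−θ_0)⋯(θ_d−θ_{d−1}) and η*_d(θ*_0) = (θ*_0−θ*_d)⋯(θ*_0−θ*_1) are nonzero since θ_0,…,θ_d are mutually distinct and θ*_0,…,θ*_d are mutually distinct. -/

import Mathlib

open Polynomial Matrix Finset

noncomputable section

/-- The lower bidiagonal matrix with diagonal entries `θ 0, …, θ d` and
subdiagonal entries `1`. -/
def matA {K : Type*} [Field K] (d : ℕ) (θ : ℕ → K) :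
    Matrix (Fin (d + 1)) (Fin (d + 1)) K :=
  Matrix.of fun i j =>
    if (i : ℕ) = (j : ℕ) then θ (i : ℕ)
    else if (i : ℕ) = (j : ℕ) + 1 then 1 else 0

/-- The upper bidiagonal matrix with diagonal entries `θs 0, …, θs d` and
superdiagonal entries `φ 1, …, φ d` (the `(i-1,i)`-entry is `φ i`). -/
def matAs {K : Type*} [Field K] (d : ℕ) (θs φ : ℕ → K) :
    Matrix (Fin (d + 1)) (Fin (d + 1)) K :=
  Matrix.of fun i j =>
    if (i : ℕ) = (j : ℕ) then θs (i : ℕ)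
    else if (j : ℕ) = (i : ℕ) + 1 then φ (j : ℕ) else 0

/-- The primitive idempotent `E_i = ∏_{j ≠ i} (M - θ_j I)/(θ_i - θ_j)` of a matrix `M`
with eigenvalues `θ 0, …, θ d`. -/
def primIdem {K : Type*} [Field K] (d : ℕ) (θ : ℕ → K)
    (M : Matrix (Fin (d + 1)) (Fin (d + 1)) K) (i : ℕ) :
    Matrix (Fin (d + 1)) (Fin (d + 1)) K :=
  Polynomial.aeval M (∏ j ∈ (Finset.range (d + 1)).erase i,
    (Polynomial.C ((θ i - θ j)⁻¹) * (Polynomial.X - Polynomial.C (θ j))))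

/-- `τ_i(λ) = (λ - θ_0)(λ - θ_1)⋯(λ - θ_{i-1})`. -/
def tauPoly {K : Type*} [Field K] (θ : ℕ → K) (i : ℕ) : Polynomial K :=
  ∏ k ∈ Finset.range i, (Polynomial.X - Polynomial.C (θ k))

/-- `η_i(λ) = (λ - θ_d)(λ - θ_{d-1})⋯(λ - θ_{d-i+1})`. -/
def etaPoly {K : Type*} [Field K] (d : ℕ) (θ : ℕ → K) (i : ℕ) : Polynomial K :=
  ∏ k ∈ Finset.range i, (Polynomial.X - Polynomial.C (θ (d - k)))


namespace LSaux

variable {K : Type*} [Field K] {d : ℕ}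

/-- Standard basis vectors indexed by `ℕ`, zero when out of range. -/
def eV (K : Type*) [Field K] (d i : ℕ) : Fin (d+1) → K := fun j => if (j : ℕ) = i then 1 else 0

lemma eV_of_gt {i : ℕ} (h : d < i) : eV K d i = 0 := by
  funext j
  have := j.isLt
  simp only [eV]
  rw [if_neg (by omega)]
  rfl

lemma mulVec_eV (M : Matrix (Fin (d+1)) (Fin (d+1)) K) {i : ℕ} (h : i ≤ d) :
    M *ᵥ eV K d i = fun j => M j ⟨i, by omega⟩ := by
  funext j
  simp only [Matrix.mulVec, dotProduct, eV]
  rw [Finset.sum_eq_single (⟨i, by omega⟩ : Fin (d+1))]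
  · simp
  · intro b _ hb
    rw [if_neg, mul_zero]
    intro hc; exact hb (Fin.ext hc)
  · intro hc; exact absurd (Finset.mem_univ _) hc

lemma entry_mulVec_eV (N : Matrix (Fin (d+1)) (Fin (d+1)) K) (i k : Fin (d+1)) :
    N i k = (N *ᵥ eV K d (k : ℕ)) i := by
  rw [mulVec_eV N (by omega : (k:ℕ) ≤ d)]

lemma matA_mulVec_eV (θ : ℕ → K) {i : ℕ} (h : i ≤ d) :
    matA d θ *ᵥ eV K d i = θ i • eV K d i + eV K d (i+1) := by
  rw [mulVec_eV _ h]
  funext j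
  simp only [matA, Matrix.of_apply, Pi.add_apply, Pi.smul_apply, eV, smul_eq_mul]
  by_cases h1 : (j:ℕ) = i
  · rw [if_pos h1, if_pos h1, if_neg (by omega), mul_one, add_zero, h1]
  · rw [if_neg h1, if_neg h1, mul_zero, zero_add]

lemma matAs_mulVec_eV (θs φ : ℕ → K) {i : ℕ} (h1 : 1 ≤ i) (h : i ≤ d) :
    matAs d θs φ *ᵥ eV K d i = θs i • eV K d i + φ i • eV K d (i-1) := by
  rw [mulVec_eV _ h]
  funext j
  simp only [matAs, Matrix.of_apply, Pi.add_apply, Pi.smul_apply, eV, smul_eq_mul]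
  by_cases ha : (j:ℕ) = i
  · rw [if_pos ha, if_pos ha, if_neg (by omega), ha, mul_one, mul_zero, add_zero]
  · rw [if_neg ha, if_neg ha, mul_zero, zero_add]
    by_cases hb : (j:ℕ) = i - 1
    · rw [if_pos (by omega), if_pos hb, mul_one]
    · rw [if_neg (by omega), if_neg hb, mul_zero]

lemma matAs_mulVec_eV0 (θs φ : ℕ → K) :
    matAs d θs φ *ᵥ eV K d 0 = θs 0 • eV K d 0 := by
  rw [mulVec_eV _ (Nat.zero_le d)]
  funext j
  simp only [matAs, Matrix.of_apply, Pi.smul_apply, eV, smul_eq_mul]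
  by_cases ha : (j:ℕ) = 0
  · rw [if_pos ha, if_pos ha, ha, mul_one]
  · rw [if_neg ha, if_neg ha, if_neg (by omega), mul_zero]

lemma aeval_mul_mulVec (M : Matrix (Fin (d+1)) (Fin (d+1)) K) (p q : Polynomial K)
    (y : Fin (d+1) → K) :
    (Polynomial.aeval M (p * q)) *ᵥ y
      = (Polynomial.aeval M p) *ᵥ ((Polynomial.aeval M q) *ᵥ y) := by
  rw [_root_.map_mul, Matrix.mulVec_mulVec]

lemma aeval_sub_mulVec (M : Matrix (Fin (d+1)) (Fin (d+1)) K) (c : K) (y : Fin (d+1) → K) :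
    (Polynomial.aeval M (X - C c)) *ᵥ y = M *ᵥ y - c • y := by
  rw [_root_.map_sub, aeval_X, aeval_C, Matrix.sub_mulVec]
  congr 1
  rw [Algebra.algebraMap_eq_smul_one, Matrix.smul_mulVec, Matrix.one_mulVec]

section Family

variable (M : Matrix (Fin (d+1)) (Fin (d+1)) K) (x : ℕ → Fin (d+1) → K) (a b : ℕ → K)

/-- Span of the tail of the family. -/
def famW (d : ℕ) (x : ℕ → Fin (d+1) → K) (t : ℕ) : Submodule K (Fin (d+1) → K) :=
  Submodule.span K {y | ∃ i, t ≤ i ∧ i ≤ d ∧ y = x i}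

lemma fam_kill (H0 : M *ᵥ x 0 = a 0 • x 0)
    (Hlow : ∀ i, 1 ≤ i → i ≤ d → M *ᵥ x i = a i • x i + b i • x (i-1)) :
    ∀ k, k ≤ d → (Polynomial.aeval M (∏ j ∈ Finset.range (k+1), (X - C (a j)))) *ᵥ x k = 0 := by
  intro k
  induction k with
  | zero =>
    intro _
    rw [Finset.prod_range_one, aeval_sub_mulVec, H0, sub_self]
  | succ k ih =>
    intro hk
    rw [Finset.prod_range_succ, aeval_mul_mulVec, aeval_sub_mulVec,
      Hlow (k+1) (by omega) hk]
    have h1 : a (k+1) • x (k+1) + b (k+1) • x (k+1-1) - a (k+1) • x (k+1) = b (k+1) • x k := by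
      simp
    rw [h1, Matrix.mulVec_smul, ih (by omega), smul_zero]

lemma fam_kill' (H0 : M *ᵥ x 0 = a 0 • x 0)
    (Hlow : ∀ i, 1 ≤ i → i ≤ d → M *ᵥ x i = a i • x i + b i • x (i-1)) :
    ∀ k m, k ≤ d → k < m →
      (Polynomial.aeval M (∏ j ∈ Finset.range m, (X - C (a j)))) *ᵥ x k = 0 := by
  intro k m hk hkm
  rw [← Finset.prod_range_mul_prod_Ico _ (Nat.succ_le_of_lt hkm), mul_comm,
    aeval_mul_mulVec, fam_kill M x a b H0 Hlow k hk, Matrix.mulVec_zero]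

lemma fam_chain
    (Hlow : ∀ i, 1 ≤ i → i ≤ d → M *ᵥ x i = a i • x i + b i • x (i-1)) :
    ∀ k, k ≤ d → (Polynomial.aeval M (∏ j ∈ Finset.Icc 1 k, (X - C (a j)))) *ᵥ x k
      = (∏ j ∈ Finset.Icc 1 k, b j) • x 0 := by
  intro k
  induction k with
  | zero =>
    intro _
    rw [show Finset.Icc 1 0 = ∅ from by simp, Finset.prod_empty, Finset.prod_empty,
      _root_.map_one, Matrix.one_mulVec, one_smul]
  | succ k ih =>
    intro hk
    rw [Finset.prod_Icc_succ_top (by omega), Finset.prod_Icc_succ_top (by omega : 1 ≤ k+1),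
      aeval_mul_mulVec, aeval_sub_mulVec, Hlow (k+1) (by omega) hk]
    have h1 : a (k+1) • x (k+1) + b (k+1) • x (k+1-1) - a (k+1) • x (k+1) = b (k+1) • x k := by
      simp
    rw [h1, Matrix.mulVec_smul, ih (by omega), smul_smul, mul_comm]

lemma famW_mono (t : ℕ) : famW d x (t+1) ≤ famW d x t := by
  apply Submodule.span_mono
  rintro y ⟨i, h1, h2, h3⟩
  exact ⟨i, by omega, h2, h3⟩

lemma famW_map
    (Hlow : ∀ i, 1 ≤ i → i ≤ d → M *ᵥ x i = a i • x i + b i • x (i-1)) (t : ℕ) :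
    ∀ y ∈ famW d x (t+1), M *ᵥ y ∈ famW d x t := by
  intro y hy
  induction hy using Submodule.span_induction with
  | mem y h =>
    obtain ⟨i, h1, h2, rfl⟩ := h
    rw [Hlow i (by omega) h2]
    exact add_mem (Submodule.smul_mem _ _ (Submodule.subset_span ⟨i, by omega, h2, rfl⟩))
      (Submodule.smul_mem _ _ (Submodule.subset_span ⟨i-1, by omega, by omega, rfl⟩))
  | zero => rw [Matrix.mulVec_zero]; exact zero_mem _
  | add y z _ _ hy hz => rw [Matrix.mulVec_add]; exact add_mem hy hz
  | smul c y _ hy => rw [Matrix.mulVec_smul]; exact Submodule.smul_mem _ _ hy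

lemma fam_top (H0 : M *ᵥ x 0 = a 0 • x 0)
    (Hlow : ∀ i, 1 ≤ i → i ≤ d → M *ᵥ x i = a i • x i + b i • x (i-1)) :
    ∀ m, m ≤ d →
      (Polynomial.aeval M (∏ j ∈ Finset.range m, (X - C (a j)))) *ᵥ x d
        - (∏ j ∈ Finset.range m, b (d - j)) • x (d - m) ∈ famW d x (d - m + 1) := by
  intro m
  induction m with
  | zero =>
    intro _
    rw [Finset.prod_range_zero, Finset.prod_range_zero, _root_.map_one, Matrix.one_mulVec,
      one_smul, Nat.sub_zero, sub_self]
    exact zero_mem _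
  | succ m ih =>
    intro hm
    have hdm1 : 1 ≤ d - m := by omega
    have hdm2 : d - m ≤ d := by omega
    have e1 : d - (m+1) + 1 = d - m := by omega
    have e2 : d - (m+1) = d - m - 1 := by omega
    rw [e1, e2]
    have hw := ih (by omega)
    set Pm : Polynomial K := ∏ j ∈ Finset.range m, (X - C (a j)) with hPm
    set z : Fin (d+1) → K := (Polynomial.aeval M Pm) *ᵥ x d with hzdef
    set Bm : K := ∏ j ∈ Finset.range m, b (d - j) with hBm
    set w : Fin (d+1) → K := z - Bm • x (d - m) with hwdef
    have hz : z = Bm • x (d - m) + w := by rw [hwdef]; abel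
    have key : (Polynomial.aeval M (∏ j ∈ Finset.range (m+1), (X - C (a j)))) *ᵥ x d
        - (∏ j ∈ Finset.range (m+1), b (d - j)) • x (d - m - 1)
        = (Bm * (a (d-m) - a m)) • x (d-m) + ((M *ᵥ w) - a m • w) := by
      rw [Finset.prod_range_succ, mul_comm, aeval_mul_mulVec, ← hzdef, aeval_sub_mulVec,
        Finset.prod_range_succ, ← hBm]
      rw [hz, Matrix.mulVec_add, Matrix.mulVec_smul, Hlow (d-m) hdm1 hdm2]
      funext j
      simp only [Pi.add_apply, Pi.sub_apply, Pi.smul_apply, smul_eq_mul]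
      ring
    rw [key]
    refine add_mem (Submodule.smul_mem _ _ (Submodule.subset_span ⟨d - m, le_rfl, hdm2, rfl⟩)) ?_
    refine sub_mem ?_ (Submodule.smul_mem _ _ (famW_mono x (d-m) hw))
    exact famW_map M x a b Hlow (d - m) w hw

end Family

lemma erase_range_top (d : ℕ) : (Finset.range (d+1)).erase d = Finset.range d := by
  ext j
  simp only [Finset.mem_erase, Finset.mem_range]
  omega

lemma erase_range_bot (d : ℕ) : (Finset.range (d+1)).erase 0 = Finset.Icc 1 d := by
  ext j
  simp only [Finset.mem_erase, Finset.mem_range, Finset.mem_Icc]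
  omega

lemma prod_Icc_one_reflect {M : Type*} [CommMonoid M] (d : ℕ) (f : ℕ → M) :
    ∏ j ∈ Finset.Icc 1 d, f j = ∏ j ∈ Finset.range d, f (d - j) := by
  refine Finset.prod_nbij' (fun j => d - j) (fun j => d - j) ?_ ?_ ?_ ?_ ?_
  · intro a ha
    simp only [Finset.mem_Icc] at ha
    simp only [Finset.mem_range]
    omega
  · intro a ha
    simp only [Finset.mem_range] at ha
    simp only [Finset.mem_Icc]
    omega
  · intro a ha
    simp only [Finset.mem_Icc] at ha
    show d - (d - a) = a
    omega
  · intro a ha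
    simp only [Finset.mem_range] at ha
    show d - (d - a) = a
    omega
  · intro a ha
    simp only [Finset.mem_Icc] at ha
    show f a = f (d - (d - a))
    congr 1
    omega

lemma primIdem_eq (θ : ℕ → K) (M : Matrix (Fin (d+1)) (Fin (d+1)) K) (i : ℕ) :
    primIdem d θ M i = (∏ j ∈ (Finset.range (d+1)).erase i, (θ i - θ j)⁻¹) •
      (Polynomial.aeval M (∏ j ∈ (Finset.range (d+1)).erase i, (X - C (θ j)))) := by
  have hC : (∏ x ∈ (Finset.range (d+1)).erase i, Polynomial.C ((θ i - θ x)⁻¹))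
      = Polynomial.C (∏ x ∈ (Finset.range (d+1)).erase i, (θ i - θ x)⁻¹) :=
    (map_prod (Polynomial.C : K →+* K[X]) _ _).symm
  rw [primIdem, Finset.prod_mul_distrib, hC, _root_.map_mul,
    Polynomial.aeval_C, Algebra.algebraMap_eq_smul_one, smul_mul_assoc, one_mul]

lemma rowA (θ : ℕ → K) (y : Fin (d+1) → K) (j : Fin (d+1)) :
    (matA d θ *ᵥ y) j = θ (j:ℕ) * y j
      + (if h : 1 ≤ (j:ℕ) then y ⟨(j:ℕ)-1, by omega⟩ else 0) := by
  simp only [Matrix.mulVec, dotProduct, matA, Matrix.of_apply]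
  have hsplit : ∀ k : Fin (d+1),
      (if (j:ℕ) = (k:ℕ) then θ (j:ℕ) else if (j:ℕ) = (k:ℕ)+1 then 1 else 0) * y k
      = (if k = j then θ (j:ℕ) * y k else 0) + (if (j:ℕ) = (k:ℕ)+1 then y k else 0) := by
    intro k
    by_cases h1 : (j:ℕ) = (k:ℕ)
    · rw [if_pos h1, if_pos (Fin.ext h1.symm), if_neg (by omega), add_zero]
    · have hkj : ¬ (k = j) := fun hc => h1 (by rw [hc])
      rw [if_neg h1]
      by_cases h2 : (j:ℕ) = (k:ℕ)+1
      · rw [if_pos h2, if_pos h2, if_neg hkj, one_mul, zero_add]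
      · rw [if_neg h2, if_neg h2, if_neg hkj, zero_mul, add_zero]
  rw [Finset.sum_congr rfl (fun k _ => hsplit k), Finset.sum_add_distrib]
  congr 1
  · rw [Finset.sum_ite_eq' Finset.univ j (fun k => θ (j:ℕ) * y k), if_pos (Finset.mem_univ _)]
  · by_cases h : 1 ≤ (j:ℕ)
    · rw [dif_pos h, Finset.sum_eq_single (⟨(j:ℕ)-1, by omega⟩ : Fin (d+1))]
      · rw [if_pos (by simp only [Fin.val_mk]; omega)]
      · intro b _ hb
        rw [if_neg]
        intro hc
        exact hb (Fin.ext (by simp only [Fin.val_mk]; omega))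
      · intro hc; exact absurd (Finset.mem_univ _) hc
    · rw [dif_neg h]
      apply Finset.sum_eq_zero
      intro k _
      rw [if_neg (by omega)]

lemma eigen_top (θ : ℕ → K) (hθ : ∀ i ≤ d, ∀ j ≤ d, θ i = θ j → i = j)
    (y : Fin (d+1) → K) (hy : matA d θ *ᵥ y = θ d • y) :
    y = y ⟨d, by omega⟩ • eV K d d := by
  have hz : ∀ k : ℕ, ∀ hk : k < d, y ⟨k, by omega⟩ = 0 := by
    intro k
    induction k with
    | zero =>
      intro h0
      have h := congrFun hy ⟨0, by omega⟩
      rw [rowA, dif_neg (by simp)] at h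
      have hne : θ 0 ≠ θ d := fun hc => by have := hθ 0 (by omega) d le_rfl hc; omega
      have h2 : (θ 0 - θ d) * y ⟨0, by omega⟩ = 0 := by
        simp only [Pi.smul_apply, smul_eq_mul] at h
        rw [add_zero] at h
        linear_combination h
      rcases mul_eq_zero.mp h2 with h3 | h3
      · exact absurd (sub_eq_zero.mp h3) hne
      · exact h3
    | succ k ih =>
      intro hk
      have h := congrFun hy ⟨k+1, by omega⟩
      rw [rowA, dif_pos (by simp)] at h
      simp only [Pi.smul_apply, smul_eq_mul] at h
      have hcast : y (⟨(((⟨k+1, by omega⟩ : Fin (d+1)):ℕ))-1, by omega⟩ : Fin (d+1))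
          = y ⟨k, by omega⟩ := by
        congr 1
      rw [hcast, ih (by omega)] at h
      have hne : θ (k+1) ≠ θ d := fun hc => by
        have := hθ (k+1) (by omega) d le_rfl hc; omega
      have h2 : (θ (k+1) - θ d) * y ⟨k+1, by omega⟩ = 0 := by linear_combination h
      rcases mul_eq_zero.mp h2 with h3 | h3
      · exact absurd (sub_eq_zero.mp h3) hne
      · exact h3
  funext j
  by_cases hj : (j:ℕ) = d
  · have hjd : j = ⟨d, by omega⟩ := Fin.ext hj
    rw [hjd]
    simp [eV]
  · have h0 : y j = 0 := by
      have := hz (j:ℕ) (by omega)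
      rwa [Fin.eta] at this
    rw [h0]
    simp only [Pi.smul_apply, eV, smul_eq_mul]
    rw [if_neg hj, mul_zero]

end LSaux


open LSaux in
theorem EZero_EsZero_ED_EsD {K : Type*} [Field K] (d : ℕ) (θ θs φ ϕ : ℕ → K)
    (hθ : ∀ i ≤ d, ∀ j ≤ d, θ i = θ j → i = j)
    (hθs : ∀ i ≤ d, ∀ j ≤ d, θs i = θs j → i = j)
    (hφ : ∀ i, 1 ≤ i → i ≤ d → φ i ≠ 0)
    (hE0 : ∀ i ≤ d, ∀ j ≤ d, 1 < |(i : ℤ) - (j : ℤ)| →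
      primIdem d θ (matA d θ) i * matAs d θs φ * primIdem d θ (matA d θ) j = 0)
    (hE1 : ∀ i ≤ d, ∀ j ≤ d, |(i : ℤ) - (j : ℤ)| = 1 →
      primIdem d θ (matA d θ) i * matAs d θs φ * primIdem d θ (matA d θ) j ≠ 0)
    (hEs0 : ∀ i ≤ d, ∀ j ≤ d, 1 < |(i : ℤ) - (j : ℤ)| →
      primIdem d θs (matAs d θs φ) i * matA d θ * primIdem d θs (matAs d θs φ) j = 0)
    (hEs1 : ∀ i ≤ d, ∀ j ≤ d, |(i : ℤ) - (j : ℤ)| = 1 →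
      primIdem d θs (matAs d θs φ) i * matA d θ * primIdem d θs (matAs d θs φ) j ≠ 0)
    (hϕ : ∀ i, 1 ≤ i → i ≤ d → ϕ i ≠ 0)
    (v : ℕ → Fin (d + 1) → K)
    (hvli : LinearIndependent K fun i : Fin (d + 1) => v (i : ℕ))
    (hvsp : Submodule.span K (Set.range fun i : Fin (d + 1) => v (i : ℕ)) = ⊤)
    (hv1 : ∀ i < d, (matA d θ).mulVec (v i) - θ (d - i) • v i = v (i + 1))
    (hv2 : (matA d θ).mulVec (v d) - θ 0 • v d = 0)
    (hv3 : ∀ i, 1 ≤ i → i ≤ d →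
      (matAs d θs φ).mulVec (v i) - θs i • v i = ϕ i • v (i - 1))
    (hv4 : (matAs d θs φ).mulVec (v 0) - θs 0 • v 0 = 0) :
    primIdem d θ (matA d θ) 0 * primIdem d θs (matAs d θs φ) 0 * primIdem d θ (matA d θ) d * primIdem d θs (matAs d θs φ) d = ((∏ k ∈ Finset.Icc (1) (d), ϕ k) / ((tauPoly θ d).eval (θ d) * (etaPoly d θs d).eval (θs 0))) • (primIdem d θ (matA d θ) 0 * primIdem d θs (matAs d θs φ) d) := by
  classical
  -- reformulated basis relations
  have hv1' : ∀ i, i < d → matA d θ *ᵥ v i = θ (d-i) • v i + v (i+1) := by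
    intro i h
    have h2 := hv1 i h
    rw [sub_eq_iff_eq_add'] at h2
    exact h2
  have hv2' : matA d θ *ᵥ v d = θ 0 • v d := by
    have h2 := hv2
    rwa [sub_eq_zero] at h2
  have hv3' : ∀ i, 1 ≤ i → i ≤ d → matAs d θs φ *ᵥ v i = θs i • v i + ϕ i • v (i-1) := by
    intro i h1 h2
    have h3 := hv3 i h1 h2
    rw [sub_eq_iff_eq_add'] at h3
    exact h3
  have hv4' : matAs d θs φ *ᵥ v 0 = θs 0 • v 0 := by
    have h2 := hv4
    rwa [sub_eq_zero] at h2
  -- family hypotheses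
  have HsE0 : matAs d θs φ *ᵥ eV K d 0 = θs 0 • eV K d 0 := matAs_mulVec_eV0 θs φ
  have HsElow : ∀ i, 1 ≤ i → i ≤ d →
      matAs d θs φ *ᵥ eV K d i = θs i • eV K d i + φ i • eV K d (i-1) :=
    fun i h1 h2 => matAs_mulVec_eV θs φ h1 h2
  have HAe0 : matA d θ *ᵥ eV K d (d - 0) = θ (d - 0) • eV K d (d - 0) := by
    simp only [Nat.sub_zero]
    rw [matA_mulVec_eV θ (le_refl d), eV_of_gt (show d < d + 1 by omega), add_zero]
  have HAelow : ∀ i, 1 ≤ i → i ≤ d →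
      matA d θ *ᵥ eV K d (d - i)
        = θ (d - i) • eV K d (d - i) + (1:K) • eV K d (d - (i-1)) := by
    intro i h1 h2
    rw [one_smul, matA_mulVec_eV θ (by omega : d - i ≤ d),
      show d - i + 1 = d - (i-1) from by omega]
  have HAv0 : matA d θ *ᵥ v (d - 0) = θ 0 • v (d - 0) := by
    simp only [Nat.sub_zero]
    exact hv2'
  have HAvlow : ∀ i, 1 ≤ i → i ≤ d →
      matA d θ *ᵥ v (d - i) = θ i • v (d-i) + (1:K) • v (d-(i-1)) := by
    intro i h1 h2
    rw [one_smul]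
    have h3 := hv1' (d - i) (by omega)
    rw [show d - (d - i) = i from by omega] at h3
    rw [h3, show d - i + 1 = d - (i-1) from by omega]
  -- scalar abbreviations
  set T : K := ∏ j ∈ Finset.range d, (θ d - θ j) with hT
  set Hc : K := ∏ j ∈ Finset.Icc 1 d, (θs 0 - θs j) with hHc
  set Csd : K := ∏ j ∈ Finset.range d, (θs d - θs j)⁻¹ with hCsd
  set Cd : K := ∏ j ∈ Finset.range d, (θ d - θ j)⁻¹ with hCd
  set Cs0 : K := ∏ j ∈ Finset.Icc 1 d, (θs 0 - θs j)⁻¹ with hCs0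
  set Phi : K := ∏ k ∈ Finset.Icc 1 d, ϕ k with hPhi
  set Phi' : K := ∏ k ∈ Finset.Icc 1 d, φ k with hPhi'
  -- primitive idempotents in scalar • aeval form
  have hEd : primIdem d θ (matA d θ) d
      = Cd • (Polynomial.aeval (matA d θ) (∏ j ∈ Finset.range d, (X - C (θ j)))) := by
    rw [primIdem_eq, erase_range_top]
  have hEsd : primIdem d θs (matAs d θs φ) d
      = Csd • (Polynomial.aeval (matAs d θs φ) (∏ j ∈ Finset.range d, (X - C (θs j)))) := by
    rw [primIdem_eq, erase_range_top]
  have hE0' : primIdem d θ (matA d θ) 0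
      = (∏ j ∈ Finset.Icc 1 d, (θ 0 - θ j)⁻¹) •
        (Polynomial.aeval (matA d θ) (∏ j ∈ Finset.Icc 1 d, (X - C (θ j)))) := by
    rw [primIdem_eq, erase_range_bot]
  have hEs0' : primIdem d θs (matAs d θs φ) 0
      = Cs0 • (Polynomial.aeval (matAs d θs φ) (∏ j ∈ Finset.Icc 1 d, (X - C (θs j)))) := by
    rw [primIdem_eq, erase_range_bot]
  -- f1 : E*_d kills e_k for k < d
  have f1 : ∀ k : ℕ, k < d → primIdem d θs (matAs d θs φ) d *ᵥ eV K d k = 0 := by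
    intro k hk
    rw [hEsd, Matrix.smul_mulVec,
      fam_kill' (matAs d θs φ) (eV K d) θs φ HsE0 HsElow k d (by omega) hk, smul_zero]
  -- f2 : E_0 kills e_k for 1 ≤ k ≤ d
  have hP0θ : (∏ j ∈ Finset.Icc 1 d, (X - C (θ j)))
      = ∏ j ∈ Finset.range d, (X - C (θ (d - j))) :=
    prod_Icc_one_reflect d (fun j => X - C (θ j))
  have f2 : ∀ k : ℕ, 1 ≤ k → k ≤ d → primIdem d θ (matA d θ) 0 *ᵥ eV K d k = 0 := by
    intro k h1 h2
    rw [hE0', Matrix.smul_mulVec, hP0θ]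
    have h3 := fam_kill' (matA d θ) (fun t => eV K d (d - t)) (fun t => θ (d - t))
      (fun _ => (1:K)) HAe0 HAelow (d - k) d (by omega) (by omega)
    simp only [Nat.sub_sub_self h2] at h3
    rw [h3, smul_zero]
  -- f3 : E_0 kills the span of e_1, ..., e_d
  have f3 : ∀ y ∈ famW d (eV K d) 1, primIdem d θ (matA d θ) 0 *ᵥ y = 0 := by
    intro y hy
    induction hy using Submodule.span_induction with
    | mem y h => obtain ⟨i, h1, h2, rfl⟩ := h; exact f2 i h1 h2
    | zero => exact Matrix.mulVec_zero _
    | add y z _ _ hy hz => rw [Matrix.mulVec_add, hy, hz, add_zero]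
    | smul c y _ hy => rw [Matrix.mulVec_smul, hy, smul_zero]
  -- f4 : E*_0 e_d
  have f4 : primIdem d θs (matAs d θs φ) 0 *ᵥ eV K d d = (Cs0 * Phi') • eV K d 0 := by
    rw [hEs0', Matrix.smul_mulVec,
      fam_chain (matAs d θs φ) (eV K d) θs φ HsElow d le_rfl, smul_smul]
  -- f5 : E*_d e_d decomposition
  have hPhi'' : (∏ j ∈ Finset.range d, φ (d - j)) = Phi' := (prod_Icc_one_reflect d φ).symm
  have f5 : ∃ w ∈ famW d (eV K d) 1,
      primIdem d θs (matAs d θs φ) d *ᵥ eV K d d = (Csd * Phi') • eV K d 0 + Csd • w := by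
    have h3 := fam_top (matAs d θs φ) (eV K d) θs φ HsE0 HsElow d le_rfl
    rw [Nat.sub_self, hPhi''] at h3
    simp only [Nat.zero_add] at h3
    refine ⟨_, h3, ?_⟩
    rw [hEsd, Matrix.smul_mulVec, ← smul_smul, smul_sub]
    abel
  -- f6 : E_d kills v_k for 1 ≤ k ≤ d
  have f6 : ∀ k : ℕ, 1 ≤ k → k ≤ d → primIdem d θ (matA d θ) d *ᵥ v k = 0 := by
    intro k h1 h2
    rw [hEd, Matrix.smul_mulVec]
    have h3 := fam_kill' (matA d θ) (fun t => v (d - t)) θ (fun _ => (1:K))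
      HAv0 HAvlow (d - k) d (by omega) (by omega)
    simp only [Nat.sub_sub_self h2] at h3
    rw [h3, smul_zero]
  -- f7 : E_d kills the span of v_1, ..., v_d
  have f7 : ∀ y ∈ famW d v 1, primIdem d θ (matA d θ) d *ᵥ y = 0 := by
    intro y hy
    induction hy using Submodule.span_induction with
    | mem y h => obtain ⟨i, h1, h2, rfl⟩ := h; exact f6 i h1 h2
    | zero => exact Matrix.mulVec_zero _
    | add y z _ _ hy hz => rw [Matrix.mulVec_add, hy, hz, add_zero]
    | smul c y _ hy => rw [Matrix.mulVec_smul, hy, smul_zero]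
  -- f8 : E*_d kills v_k for k < d
  have f8 : ∀ k : ℕ, k < d → primIdem d θs (matAs d θs φ) d *ᵥ v k = 0 := by
    intro k hk
    rw [hEsd, Matrix.smul_mulVec,
      fam_kill' (matAs d θs φ) v θs ϕ hv4' hv3' k d (by omega) hk, smul_zero]
  -- f9 : E*_d v_d decomposition
  have hPhiv : (∏ j ∈ Finset.range d, ϕ (d - j)) = Phi := (prod_Icc_one_reflect d ϕ).symm
  have f9 : ∃ w ∈ famW d v 1,
      primIdem d θs (matAs d θs φ) d *ᵥ v d = (Csd * Phi) • v 0 + Csd • w := by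
    have h3 := fam_top (matAs d θs φ) v θs ϕ hv4' hv3' d le_rfl
    rw [Nat.sub_self, hPhiv] at h3
    simp only [Nat.zero_add] at h3
    refine ⟨_, h3, ?_⟩
    rw [hEsd, Matrix.smul_mulVec, ← smul_smul, smul_sub]
    abel
  -- f10 : aeval Pd applied to v_0
  have f10 : ∃ w ∈ famW d (fun t => v (d - t)) 1,
      (Polynomial.aeval (matA d θ) (∏ j ∈ Finset.range d, (X - C (θ j)))) *ᵥ v 0 = v d + w := by
    have h3 := fam_top (matA d θ) (fun t => v (d - t)) θ (fun _ => (1:K)) HAv0 HAvlow d le_rfl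
    simp only [Nat.sub_self, Nat.sub_zero, Nat.zero_add, Finset.prod_const_one, one_smul] at h3
    refine ⟨_, h3, by abel⟩
  -- the basis B given by v
  have hsp' : ⊤ ≤ Submodule.span K (Set.range fun i : Fin (d+1) => v (i:ℕ)) := hvsp.ge
  set B : Module.Basis (Fin (d+1)) K (Fin (d+1) → K) := Module.Basis.mk hvli hsp' with hBdef
  have hB : ∀ i : Fin (d+1), B i = v (i:ℕ) := fun i => Module.Basis.mk_apply hvli hsp' i
  have hrepr : ∀ (i : ℕ) (h : i ≤ d) (k : Fin (d+1)),
      B.repr (v i) k = if k = ⟨i, by omega⟩ then 1 else 0 := by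
    intro i h k
    rw [← hB ⟨i, by omega⟩, B.repr_self, Finsupp.single_apply]
    by_cases hk : (⟨i, by omega⟩ : Fin (d+1)) = k
    · rw [if_pos hk, if_pos hk.symm]
    · rw [if_neg hk, if_neg (fun hc => hk hc.symm)]
  have f11 : ∀ y ∈ famW d (fun t => v (d - t)) 1, B.repr y ⟨d, by omega⟩ = 0 := by
    intro y hy
    induction hy using Submodule.span_induction with
    | mem y h =>
      obtain ⟨i, h1, h2, rfl⟩ := h
      show B.repr (v (d - i)) ⟨d, by omega⟩ = 0
      rw [hrepr (d - i) (by omega), if_neg]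
      intro hc
      have hc2 := congrArg Fin.val hc
      simp only [Fin.val_mk] at hc2
      omega
    | zero => simp
    | add y z _ _ hy hz => rw [map_add, Finsupp.add_apply, hy, hz, add_zero]
    | smul c y _ hy => rw [_root_.map_smul, Finsupp.smul_apply, hy, smul_zero]
  have f12 : B.repr (v d) ⟨d, by omega⟩ = 1 := by
    rw [hrepr d le_rfl, if_pos rfl]
  -- the eigen-decomposition fact: E_d (E*_d e_d) is a multiple of e_d
  have annA : Polynomial.aeval (matA d θ) (∏ j ∈ Finset.range (d+1), (X - C (θ j))) = 0 := by
    have hrefl : (∏ j ∈ Finset.range (d+1), (X - C (θ j)))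
        = ∏ j ∈ Finset.range (d+1), (X - C (θ (d - j))) := by
      rw [← Finset.prod_range_reflect (fun j => X - C (θ j)) (d+1)]
      apply Finset.prod_congr rfl
      intro j _
      have : d + 1 - 1 - j = d - j := by omega
      rw [this]
    ext i k
    rw [Matrix.zero_apply, entry_mulVec_eV (Polynomial.aeval (matA d θ)
      (∏ j ∈ Finset.range (d+1), (X - C (θ j)))) i k, hrefl]
    have h3 := fam_kill' (matA d θ) (fun t => eV K d (d - t)) (fun t => θ (d - t))
      (fun _ => (1:K)) HAe0 HAelow (d - (k:ℕ)) (d+1) (by omega) (by omega)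
    simp only [Nat.sub_sub_self (by omega : (k:ℕ) ≤ d)] at h3
    rw [h3]
    rfl
  have hσex : ∃ σ : K, primIdem d θ (matA d θ) d *ᵥ
      (primIdem d θs (matAs d θs φ) d *ᵥ eV K d d) = σ • eV K d d := by
    set z : Fin (d+1) → K := primIdem d θs (matAs d θs φ) d *ᵥ eV K d d with hzd
    have hstep : matA d θ *ᵥ ((Polynomial.aeval (matA d θ)
          (∏ j ∈ Finset.range d, (X - C (θ j)))) *ᵥ z)
        - θ d • ((Polynomial.aeval (matA d θ) (∏ j ∈ Finset.range d, (X - C (θ j)))) *ᵥ z)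
        = 0 := by
      rw [← aeval_sub_mulVec, ← aeval_mul_mulVec]
      rw [show (X - C (θ d)) * (∏ j ∈ Finset.range d, (X - C (θ j)))
          = ∏ j ∈ Finset.range (d+1), (X - C (θ j)) from by
        rw [Finset.prod_range_succ, mul_comm]]
      rw [annA, Matrix.zero_mulVec]
    have hstep' : matA d θ *ᵥ ((Polynomial.aeval (matA d θ)
          (∏ j ∈ Finset.range d, (X - C (θ j)))) *ᵥ z)
        = θ d • ((Polynomial.aeval (matA d θ) (∏ j ∈ Finset.range d, (X - C (θ j)))) *ᵥ z) :=
      sub_eq_zero.mp hstep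
    have hAy : matA d θ *ᵥ (primIdem d θ (matA d θ) d *ᵥ z)
        = θ d • (primIdem d θ (matA d θ) d *ᵥ z) := by
      rw [hEd, Matrix.smul_mulVec, Matrix.mulVec_smul, hstep', smul_comm]
    exact ⟨_, eigen_top θ hθ _ hAy⟩
  obtain ⟨σ, hσ⟩ := hσex
  -- trace computation 1 : trace (E_d * E*_d) = σ
  have htr1 : Matrix.trace (primIdem d θ (matA d θ) d * primIdem d θs (matAs d θs φ) d) = σ := by
    rw [Matrix.trace]
    rw [Finset.sum_eq_single (⟨d, by omega⟩ : Fin (d+1))]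
    · rw [Matrix.diag_apply, entry_mulVec_eV
        (primIdem d θ (matA d θ) d * primIdem d θs (matAs d θs φ) d) _ _,
        ← Matrix.mulVec_mulVec]
      simp only [Fin.val_mk]
      rw [hσ]
      simp [eV]
    · intro b _ hb
      have hbd : (b:ℕ) < d := by
        have := b.isLt
        rcases Nat.lt_or_ge (b:ℕ) d with h | h
        · exact h
        · exact absurd (Fin.ext (by omega : (b:ℕ) = d)) hb
      rw [Matrix.diag_apply, entry_mulVec_eV
        (primIdem d θ (matA d θ) d * primIdem d θs (matAs d θs φ) d) _ _,
        ← Matrix.mulVec_mulVec, f1 (b:ℕ) hbd, Matrix.mulVec_zero]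
      rfl
    · intro hc; exact absurd (Finset.mem_univ _) hc
  -- trace computation 2 : trace (E_d * E*_d) = Csd * Phi * Cd
  have htr2 : Matrix.trace (primIdem d θ (matA d θ) d * primIdem d θs (matAs d θs φ) d)
      = Csd * Phi * Cd := by
    have t1 : LinearMap.trace K (Fin (d+1) → K)
        (Matrix.toLin' (primIdem d θ (matA d θ) d * primIdem d θs (matAs d θs φ) d))
        = Matrix.trace (primIdem d θ (matA d θ) d * primIdem d θs (matAs d θs φ) d) := by
      rw [LinearMap.trace_eq_matrix_trace K (Pi.basisFun K (Fin (d+1))),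
        LinearMap.toMatrix_eq_toMatrix', LinearMap.toMatrix'_toLin']
    rw [← t1, LinearMap.trace_eq_matrix_trace K B, Matrix.trace]
    rw [Finset.sum_eq_single (⟨d, by omega⟩ : Fin (d+1))]
    · rw [Matrix.diag_apply, LinearMap.toMatrix_apply, Matrix.toLin'_apply, hB]
      simp only [Fin.val_mk]
      rw [← Matrix.mulVec_mulVec]
      obtain ⟨w, hw, hdec⟩ := f9
      rw [hdec, Matrix.mulVec_add, Matrix.mulVec_smul, Matrix.mulVec_smul, f7 w hw,
        smul_zero, add_zero]
      obtain ⟨w', hw', hdec'⟩ := f10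
      rw [hEd, Matrix.smul_mulVec, hdec']
      rw [_root_.map_smul, _root_.map_smul, Finsupp.smul_apply, Finsupp.smul_apply, map_add,
        Finsupp.add_apply, f12, f11 w' hw', add_zero, smul_eq_mul, smul_eq_mul, mul_one]
    · intro b _ hb
      have hbd : (b:ℕ) < d := by
        have := b.isLt
        rcases Nat.lt_or_ge (b:ℕ) d with h | h
        · exact h
        · exact absurd (Fin.ext (by omega : (b:ℕ) = d)) hb
      rw [Matrix.diag_apply, LinearMap.toMatrix_apply, Matrix.toLin'_apply, hB,
        ← Matrix.mulVec_mulVec, f8 (b:ℕ) hbd, Matrix.mulVec_zero, map_zero]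
      rfl
    · intro hc; exact absurd (Finset.mem_univ _) hc
  have hσv : σ = Csd * Phi * Cd := by rw [← htr1, htr2]
  -- evaluations of tauPoly and etaPoly
  have hτ : (tauPoly θ d).eval (θ d) = T := by
    rw [tauPoly, Polynomial.eval_prod, hT]
    apply Finset.prod_congr rfl
    intro j _
    rw [Polynomial.eval_sub, Polynomial.eval_X, Polynomial.eval_C]
  have hη : (etaPoly d θs d).eval (θs 0) = Hc := by
    rw [etaPoly, Polynomial.eval_prod, hHc, prod_Icc_one_reflect d (fun j => θs 0 - θs j)]
    apply Finset.prod_congr rfl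
    intro j _
    rw [Polynomial.eval_sub, Polynomial.eval_X, Polynomial.eval_C]
  have hCdT : Cd = T⁻¹ := by
    rw [hCd, hT, ← Finset.prod_inv_distrib]
  have hCs0H : Cs0 = Hc⁻¹ := by
    rw [hCs0, hHc, ← Finset.prod_inv_distrib]
  -- final assembly
  ext i k
  rw [Matrix.smul_apply,
    entry_mulVec_eV (primIdem d θ (matA d θ) 0 * primIdem d θs (matAs d θs φ) 0 *
      primIdem d θ (matA d θ) d * primIdem d θs (matAs d θs φ) d) i k,
    entry_mulVec_eV (primIdem d θ (matA d θ) 0 * primIdem d θs (matAs d θs φ) d) i k]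
  simp only [← Matrix.mulVec_mulVec]
  by_cases hk : (k:ℕ) = d
  · rw [hk, hσ]
    rw [Matrix.mulVec_smul, f4, Matrix.mulVec_smul, Matrix.mulVec_smul]
    obtain ⟨w, hw, hdec⟩ := f5
    rw [hdec, Matrix.mulVec_add, Matrix.mulVec_smul, Matrix.mulVec_smul, f3 w hw,
      smul_zero, add_zero]
    rw [hτ, hη, hσv, hCdT, hCs0H]
    simp only [Pi.smul_apply, smul_eq_mul]
    rw [div_eq_mul_inv, mul_inv]
    ring
  · rw [f1 (k:ℕ) (by omega)]
    simp only [Matrix.mulVec_zero, Pi.zero_apply, smul_zero]
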